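/- Let X be an essentially bounded random variable and φ : ℝ → ℝ a convex function. Then φ(M(X|𝓗)) ≤ M(φ(X)|𝓗) P-a.s. (Jensen's inequality for the conditional essential supremum). -/

import Mathlib

open MeasureTheory Filter

/-- A real random variable is essentially bounded w.r.t. the measure `P`. -/
def EssBdd {Ω : Type*} {F : MeasurableSpace Ω} (P : @Measure Ω F) (X : Ω → ℝ) : Prop :=
  ∃ C : ℝ, ∀ᵐ ω ∂P, |X ω| ≤ C

/-- `Y` is the conditional essential supremum `M(X|H)` of `X` given the sub-σ-algebra `H`:
`Y` is `H`-measurable, essentially bounded, `X ≤ Y` a.s., and `Y` is a.s. below every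
`H`-measurable `Z` with `X ≤ Z` a.s. -/
def IsCondEssSup {Ω : Type*} {F : MeasurableSpace Ω} (P : @Measure Ω F)
    (H : MeasurableSpace Ω) (X Y : Ω → ℝ) : Prop :=
  Measurable[H] Y ∧ EssBdd P Y ∧ (∀ᵐ ω ∂P, X ω ≤ Y ω) ∧
    ∀ Z : Ω → ℝ, Measurable[H] Z → (∀ᵐ ω ∂P, X ω ≤ Z ω) → ∀ᵐ ω ∂P, Y ω ≤ Z ω

/-- `Y` is the conditional essential infimum `m(X|H) = -M(-X|H)`. -/
def IsCondEssInf {Ω : Type*} {F : MeasurableSpace Ω} (P : @Measure Ω F)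
    (H : MeasurableSpace Ω) (X Y : Ω → ℝ) : Prop :=
  IsCondEssSup P H (fun ω => -X ω) (fun ω => -Y ω)

/-- A choice of subgradient of `phi` at `t` : the sup of slopes from the left. -/
noncomputable def subgrad (phi : ℝ → ℝ) (t : ℝ) : ℝ :=
  sSup ((fun p => (phi t - phi p) / (t - p)) '' Set.Iio t)

section subgrad

variable {phi : ℝ → ℝ}

lemma slope_mono (hphi : ConvexOn ℝ Set.univ phi) {p t r : ℝ} (hpt : p < t) (htr : t < r) :
    (phi t - phi p) / (t - p) ≤ (phi r - phi t) / (r - t) :=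
  hphi.slope_mono_adjacent (Set.mem_univ p) (Set.mem_univ r) hpt htr

lemma subgrad_le_slope (hphi : ConvexOn ℝ Set.univ phi) {t r : ℝ} (htr : t < r) :
    subgrad phi t ≤ (phi r - phi t) / (r - t) := by
  apply csSup_le
  · exact ⟨(phi t - phi (t - 1)) / (t - (t - 1)), ⟨t - 1, by simp, rfl⟩⟩
  · rintro s ⟨p, hp, rfl⟩
    exact slope_mono hphi hp htr

lemma slope_le_subgrad (hphi : ConvexOn ℝ Set.univ phi) {p t : ℝ} (hpt : p < t) :
    (phi t - phi p) / (t - p) ≤ subgrad phi t := by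
  apply le_csSup
  · refine ⟨(phi (t + 1) - phi t) / (t + 1 - t), ?_⟩
    rintro s ⟨u, hu, rfl⟩
    exact slope_mono hphi hu (by linarith)
  · exact ⟨p, hpt, rfl⟩

/-- The line through `(t, phi t)` with slope `subgrad phi t` is a global lower bound of `phi`. -/
lemma subgrad_support (hphi : ConvexOn ℝ Set.univ phi) (t x : ℝ) : phi t + subgrad phi t * (x - t) ≤ phi x := by
  rcases lt_trichotomy x t with h | h | h
  · have h1 : (phi t - phi x) / (t - x) ≤ subgrad phi t := slope_le_subgrad hphi h
    have h2 : (0:ℝ) < t - x := by linarith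
    rw [div_le_iff₀ h2] at h1
    nlinarith
  · simp [h]
  · have h1 : subgrad phi t ≤ (phi x - phi t) / (x - t) := subgrad_le_slope hphi h
    have h2 : (0:ℝ) < x - t := by linarith
    rw [le_div_iff₀ h2] at h1
    linarith

/-- If the supporting line at every rational is below `c` at the point `x`,
then `phi x ≤ c`. -/
lemma phi_le_of_subgrad_lines_le (hphi : ConvexOn ℝ Set.univ phi) {x c : ℝ}
    (h : ∀ q : ℚ, phi q + subgrad phi (q : ℝ) * (x - q) ≤ c) : phi x ≤ c := by
  by_contra hc
  push_neg at hc
  set ε := (phi x - c) / 2 with hε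
  have hεpos : 0 < ε := by simp only [hε]; linarith
  -- continuity of phi at x
  have hcont : ContinuousAt phi x := hphi.locallyLipschitz.continuous.continuousAt
  rw [Metric.continuousAt_iff] at hcont
  obtain ⟨δ, hδpos, hδ⟩ := hcont (ε / 2) (by linarith)
  -- bound on the subgradient for q ∈ (x, x+1)
  set B : ℝ := (phi (x + 3) - phi (x + 2)) / 1 with hB
  set δ' : ℝ := min δ (min 1 ((ε / 2) / (|B| + 1))) with hδ'
  have hBpos : 0 < |B| + 1 := by positivity
  have hδ'pos : 0 < δ' := by
    refine lt_min hδpos (lt_min one_pos (by positivity))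
  obtain ⟨q, hq1, hq2⟩ := exists_rat_btwn (show x < x + δ' by linarith)
  have hq2' : (q : ℝ) < x + 1 := lt_of_lt_of_le hq2 (by
    have : δ' ≤ 1 := le_trans (min_le_right _ _) (min_le_left _ _)
    linarith)
  -- subgradient bound
  have hs1 : subgrad phi (q : ℝ) ≤ (phi (x + 2) - phi q) / (x + 2 - q) :=
    subgrad_le_slope hphi (by linarith)
  have hs2 : (phi (x + 2) - phi q) / (x + 2 - q) ≤ B := by
    have := slope_mono hphi (show (q:ℝ) < x + 2 by linarith) (show x + 2 < x + 3 by linarith)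
    calc (phi (x + 2) - phi q) / (x + 2 - q)
        ≤ (phi (x+3) - phi (x+2)) / (x + 3 - (x + 2)) := this
      _ = B := by rw [hB]; norm_num
  have hsB : subgrad phi (q : ℝ) ≤ B := le_trans hs1 hs2
  -- lower bound on the line's value at x
  have hxq : x - (q : ℝ) < 0 := by linarith
  have hmul : B * (x - q) ≤ subgrad phi (q : ℝ) * (x - q) :=
    mul_le_mul_of_nonpos_right hsB hxq.le
  have hqδ : (q : ℝ) - x < δ' := by linarith
  have hqx : (0:ℝ) < (q : ℝ) - x := by linarith
  have hBbound : -(ε / 2) ≤ B * (x - q) := by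
    have h1 : B * (x - q) = -(B * ((q:ℝ) - x)) := by ring
    have h2 : B * ((q:ℝ) - x) ≤ |B| * ((q:ℝ) - x) := by
      exact mul_le_mul_of_nonneg_right (le_abs_self B) hqx.le
    have h3 : |B| * ((q:ℝ) - x) ≤ (|B| + 1) * δ' := by
      apply mul_le_mul (by linarith) hqδ.le hqx.le hBpos.le
    have h4 : (|B| + 1) * δ' ≤ ε / 2 := by
      have : δ' ≤ (ε / 2) / (|B| + 1) := le_trans (min_le_right _ _) (min_le_right _ _)
      calc (|B| + 1) * δ' ≤ (|B| + 1) * ((ε / 2) / (|B| + 1)) :=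
            mul_le_mul_of_nonneg_left this hBpos.le
        _ = ε / 2 := by field_simp
    linarith
  -- continuity bound
  have hφq : |phi q - phi x| < ε / 2 := by
    have : dist (q : ℝ) x < δ := by
      rw [Real.dist_eq, abs_of_pos hqx]
      exact lt_of_lt_of_le hqδ (min_le_left _ _)
    simpa [Real.dist_eq] using hδ this
  have hφq' : phi x - ε / 2 ≤ phi q := by
    have := abs_lt.1 hφq
    linarith [this.1]
  have hline := h q
  have : phi x - ε ≤ c := by
    calc phi x - ε = (phi x - ε / 2) + (-(ε / 2)) := by ring
      _ ≤ phi q + subgrad phi (q : ℝ) * (x - q) := by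
          have := le_trans hBbound hmul
          linarith
      _ ≤ c := hline
  simp only [hε] at this
  linarith

end subgrad

/-- Jensen's inequality for the conditional essential supremum: for convex `φ`,
`φ(M(X|H)) ≤ M(φ(X)|H)` a.s. -/
theorem condEssSup_jensen {Ω : Type*} [F : MeasurableSpace Ω]
    (P : Measure Ω) [IsProbabilityMeasure P] (H : MeasurableSpace Ω) (hH : H ≤ F)
    (X MX Mphi : Ω → ℝ) (hX : EssBdd P X)
    (phi : ℝ → ℝ) (hphi : ConvexOn ℝ Set.univ phi)
    (hMX : IsCondEssSup P H X MX)
    (hMphi : IsCondEssSup P H (fun ω => phi (X ω)) Mphi) :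
    ∀ᵐ ω ∂P, phi (MX ω) ≤ Mphi ω := by
  obtain ⟨hMXmeas, _, hXle, hMXmin⟩ := hMX
  obtain ⟨hMphimeas, _, hphile, _⟩ := hMphi
  -- for each rational q, the supporting line at q, evaluated at MX, is a.e. ≤ Mphi
  have key : ∀ q : ℚ, ∀ᵐ ω ∂P, phi q + subgrad phi (q : ℝ) * (MX ω - q) ≤ Mphi ω := by
    intro q
    set a : ℝ := subgrad phi (q : ℝ) with ha
    rcases le_or_gt a 0 with hA | hA
    · filter_upwards [hXle, hphile] with ω h1 h2
      have hsup := subgrad_support hphi (q : ℝ) (X ω)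
      have hmono : a * (MX ω - q) ≤ a * (X ω - q) :=
        mul_le_mul_of_nonpos_left (by linarith) hA
      linarith
    · -- positive slope: use minimality of MX with Z = (Mphi - (phi q - a * q)) / a
      set c : ℝ := phi q - a * (q : ℝ) with hc
      have hZmeas : Measurable[H] (fun ω => (Mphi ω - c) / a) :=
        (hMphimeas.sub measurable_const).div_const a
      have hXZ : ∀ᵐ ω ∂P, X ω ≤ (Mphi ω - c) / a := by
        filter_upwards [hphile] with ω h2
        have hsup := subgrad_support hphi (q : ℝ) (X ω)
        rw [le_div_iff₀ hA]
        have : a * X ω + c = phi q + a * (X ω - q) := by rw [hc]; ring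
        linarith
      have hmain := hMXmin _ hZmeas hXZ
      filter_upwards [hmain] with ω h
      rw [le_div_iff₀ hA, mul_comm] at h
      have : phi q + a * (MX ω - q) = a * MX ω + c := by rw [hc]; ring
      linarith
  have hall : ∀ᵐ ω ∂P, ∀ q : ℚ, phi q + subgrad phi (q : ℝ) * (MX ω - q) ≤ Mphi ω :=
    (ae_all_iff).2 key
  filter_upwards [hall] with ω hω
  exact phi_le_of_subgrad_lines_le hphi hω
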